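/- Let X be a finite-dimensional real normed vector space, let N ≥ 1 be an integer, let α ∈ (0,1), let K ≥ 1, and let c, C, p be positive real numbers. Then there exist M > 0 and λ ∈ (0,1) with the following property: for every function V : X → ℝ satisfying c·‖x‖^p ≤ V(x) ≤ C·‖x‖^p for all x ∈ X, every sequence x : ℕ → X, and every strictly increasing sequence τ : ℕ → ℕ such that τ_0 = 0, τ_{κ+1} − τ_κ ≤ N for all κ, V(x(τ_{κ+1})) ≤ (1−α)·V(x(τ_κ)) for all κ, and V(x(t)) ≤ K·V(x(τ_κ)) for all κ and all t with τ_κ ≤ t < τ_{κ+1}, it holds that ‖x(t)‖ ≤ M·λ^t·‖x(0)‖ for every t ∈ ℕ. -/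
import Mathlib


/-- Non-monotonic Lyapunov argument: if V is sandwiched between
c‖x‖^p and C‖x‖^p, decays by the factor (1-α) along sampling times τ_κ with gaps
at most N, and grows by at most the factor K ≥ 1 in between, then the state norm
decays exponentially, with constants M, λ depending only on the data N, α, K, c, C, p. -/
theorem stmt_2 (X : Type*) [NormedAddCommGroup X] [NormedSpace ℝ X]
    [FiniteDimensional ℝ X]
    (N : ℕ) (hN : 1 ≤ N) (α : ℝ) (hα0 : 0 < α) (hα1 : α < 1)
    (K : ℝ) (hK : 1 ≤ K) (c C p : ℝ) (hc : 0 < c) (hC : 0 < C) (hp : 0 < p) :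
    ∃ M > 0, ∃ lam ∈ Set.Ioo (0 : ℝ) 1,
      ∀ (V : X → ℝ) (x : ℕ → X) (τ : ℕ → ℕ),
        (∀ z : X, c * ‖z‖ ^ p ≤ V z) →
        (∀ z : X, V z ≤ C * ‖z‖ ^ p) →
        StrictMono τ →
        τ 0 = 0 →
        (∀ κ : ℕ, τ (κ + 1) - τ κ ≤ N) →
        (∀ κ : ℕ, V (x (τ (κ + 1))) ≤ (1 - α) * V (x (τ κ))) →
        (∀ κ t : ℕ, τ κ ≤ t → t < τ (κ + 1) → V (x t) ≤ K * V (x (τ κ))) →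
        ∀ t : ℕ, ‖x t‖ ≤ M * lam ^ t * ‖x 0‖ := by
  set r : ℝ := 1 - α with hr
  have hr0 : (0:ℝ) < r := by simp [hr]; linarith
  have hr1 : r < 1 := by simp [hr]; linarith
  have hNpos : (0:ℝ) < (N:ℝ) := by exact_mod_cast hN
  set lam : ℝ := r ^ (1/((N:ℝ)*p)) with hlam
  have hlam0 : 0 < lam := Real.rpow_pos_of_pos hr0 _
  have hlam1 : lam < 1 := Real.rpow_lt_one hr0.le hr1 (by positivity)
  set M : ℝ := (K*C/c) ^ (1/p) * r ^ (-(1/p)) with hM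
  have hM0 : 0 < M := by
    have := Real.rpow_pos_of_pos hr0 (-(1/p))
    have h2 : (0:ℝ) < K*C/c := by positivity
    have := Real.rpow_pos_of_pos h2 (1/p)
    positivity
  refine ⟨M, hM0, lam, ⟨hlam0, hlam1⟩, ?_⟩
  intro V x τ hVl hVu hmono hτ0 hgap hdec hgrow t
  -- find κ with τ κ ≤ t < τ (κ+1)
  have hPex : ∃ m, t < τ m := ⟨t+1, lt_of_lt_of_le (Nat.lt_succ_self t) (hmono.le_apply)⟩
  obtain ⟨κ, hk1, hk2⟩ : ∃ κ, τ κ ≤ t ∧ t < τ (κ+1) := by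
    classical
    set m := Nat.find hPex with hmdef
    have hm : t < τ m := Nat.find_spec hPex
    have hm0 : m ≠ 0 := by
      intro h
      rw [h, hτ0] at hm; omega
    refine ⟨m - 1, ?_, ?_⟩
    · have := Nat.find_min hPex (m := m - 1) (by omega)
      omega
    · have : m - 1 + 1 = m := by omega
      rw [this]; exact hm
  -- τ j ≤ j * N
  have hstep : ∀ j, τ (j+1) ≤ τ j + N := by
    intro j
    have h1 := hgap j
    have h2 := (hmono (Nat.lt_succ_self j)).le
    omega
  have hub : ∀ j, τ j ≤ j * N := by
    intro j; induction j with
    | zero => simp [hτ0]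
    | succ n ih =>
      have h := hstep n
      have : (n+1) * N = n * N + N := by ring
      omega
  have htlt : (t:ℝ) < ((κ:ℝ)+1) * N := by
    have : t < (κ+1) * N := lt_of_lt_of_le hk2 (hub (κ+1))
    exact_mod_cast this
  -- V nonneg
  have hVnn : ∀ z, 0 ≤ V z := fun z => le_trans (by positivity) (hVl z)
  -- V (x (τ κ)) ≤ r^κ * V (x 0)
  have hVκ' : ∀ j, V (x (τ j)) ≤ r ^ j * V (x 0) := by
    intro j
    induction j with
    | zero => simp [hτ0]
    | succ n ih =>
      calc V (x (τ (n+1))) ≤ r * V (x (τ n)) := hdec n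
        _ ≤ r * (r ^ n * V (x 0)) := mul_le_mul_of_nonneg_left ih hr0.le
        _ = r ^ (n+1) * V (x 0) := by ring
  have hVκ := hVκ' κ
  have hmain : c * ‖x t‖ ^ p ≤ K * C * r ^ κ * ‖x 0‖ ^ p := by
    have h1 : V (x t) ≤ K * V (x (τ κ)) := hgrow κ t hk1 hk2
    have h2 : V (x 0) ≤ C * ‖x 0‖ ^ p := hVu (x 0)
    have hrk : (0:ℝ) ≤ r ^ κ := by positivity
    have h3 : r ^ κ * V (x 0) ≤ r ^ κ * (C * ‖x 0‖ ^ p) :=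
      mul_le_mul_of_nonneg_left h2 hrk
    have h4 : V (x t) ≤ K * (r ^ κ * (C * ‖x 0‖ ^ p)) :=
      le_trans h1 (mul_le_mul_of_nonneg_left (le_trans hVκ h3) (by linarith))
    calc c * ‖x t‖ ^ p ≤ V (x t) := hVl (x t)
      _ ≤ K * (r ^ κ * (C * ‖x 0‖ ^ p)) := h4
      _ = K * C * r ^ κ * ‖x 0‖ ^ p := by ring
  have hdivided : ‖x t‖ ^ p ≤ (K*C/c) * r ^ κ * ‖x 0‖ ^ p := by
    rw [div_mul_eq_mul_div, div_mul_eq_mul_div, le_div_iff₀ hc]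
    linarith [hmain]
  -- take p-th roots
  have hroot : ‖x t‖ ≤ (K*C/c) ^ (1/p) * r ^ ((κ:ℝ) * (1/p)) * ‖x 0‖ := by
    have h := Real.rpow_le_rpow (by positivity) hdivided (by positivity : (0:ℝ) ≤ 1/p)
    have hL : (‖x t‖ ^ p) ^ (1/p) = ‖x t‖ := by
      rw [← Real.rpow_mul (norm_nonneg _), mul_one_div, div_self hp.ne', Real.rpow_one]
    have hR : ((K*C/c) * r ^ κ * ‖x 0‖ ^ p) ^ (1/p)
        = (K*C/c) ^ (1/p) * r ^ ((κ:ℝ) * (1/p)) * ‖x 0‖ := by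
      rw [Real.mul_rpow (by positivity) (by positivity),
          Real.mul_rpow (by positivity) (by positivity),
          ← Real.rpow_natCast r κ, ← Real.rpow_mul hr0.le,
          ← Real.rpow_mul (norm_nonneg _), mul_one_div p, div_self hp.ne', Real.rpow_one]
    rw [hL, hR] at h
    exact h
  -- exponent comparison
  have hexp : r ^ ((κ:ℝ) * (1/p)) ≤ lam ^ t * r ^ (-(1/p)) := by
    have hlamt : lam ^ t = r ^ ((1/((N:ℝ)*p)) * t) := by
      rw [hlam, ← Real.rpow_natCast (r ^ (1/((N:ℝ)*p))) t, ← Real.rpow_mul hr0.le]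
    rw [hlamt, ← Real.rpow_add hr0]
    apply Real.rpow_le_rpow_of_exponent_ge hr0 hr1.le
    have hdiv : (t:ℝ)/N - 1 ≤ (κ:ℝ) := by
      have h := (div_lt_iff₀ hNpos).2 (by linarith [htlt] : (t:ℝ) < ((κ:ℝ)+1) * N)
      linarith
    have : (1/((N:ℝ)*p)) * t + -(1/p) = ((t:ℝ)/N - 1) * (1/p) := by
      field_simp; ring
    rw [this]
    have h1p : (0:ℝ) ≤ 1/p := by positivity
    exact mul_le_mul_of_nonneg_right hdiv h1p
  calc ‖x t‖ ≤ (K*C/c) ^ (1/p) * r ^ ((κ:ℝ) * (1/p)) * ‖x 0‖ := hroot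
    _ ≤ (K*C/c) ^ (1/p) * (lam ^ t * r ^ (-(1/p))) * ‖x 0‖ := by
        apply mul_le_mul_of_nonneg_right _ (norm_nonneg _)
        apply mul_le_mul_of_nonneg_left hexp
        positivity
    _ = M * lam ^ t * ‖x 0‖ := by rw [hM]; ring
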